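/- For every point p = [x:y:z] ∈ ℙ² that is not one of the three coordinate points [1:0:0], [0:1:0], [0:0:1], the function r ↦ Φ(r·p) = Φ([rx : r⁻¹y : z]) is a strictly increasing function of r on ℝ_{>0}. -/
import Mathlib


open LinearAlgebra.Projectivization Projectivization

/-- The quotient topology on a projectivization (of a topological vector space). -/
noncomputable instance {K V : Type*} [DivisionRing K] [AddCommGroup V] [Module K V]
    [TopologicalSpace V] : TopologicalSpace (ℙ K V) :=
  inferInstanceAs (TopologicalSpace (Quotient (projectivizationSetoid K V)))

/-- The complex projective plane `ℙ²`. -/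
abbrev P2 := ℙ ℂ (Fin 3 → ℂ)

/-- The point `[x : y : z]` of `ℙ²` (with the junk value `[1:0:0]` when `(x,y,z) = 0`). -/
noncomputable def pt (x y z : ℂ) : P2 :=
  if h : ![x, y, z] ≠ 0 then Projectivization.mk ℂ ![x, y, z] h
  else Projectivization.mk ℂ ![1, 0, 0] (by simp)

/-- The map `Φ : ℙ² → ℝ`, `Φ([x:y:z]) = (|x|² − |y|²)/(|x|² + |y|² + |z|²)`;
it is well defined since the formula is invariant under scaling of `(x,y,z)`. -/
noncomputable def Phi : P2 → ℝ :=
  Projectivization.lift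
    (fun v => (‖v.1 0‖ ^ 2 - ‖v.1 1‖ ^ 2) / (‖v.1 0‖ ^ 2 + ‖v.1 1‖ ^ 2 + ‖v.1 2‖ ^ 2))
    (by
      rintro ⟨a, ha⟩ ⟨b, hb⟩ t (rfl : a = t • b)
      have ht : t ≠ 0 := by rintro rfl; simp at ha
      have hnorm : ∀ i, ‖(t • b) i‖ ^ 2 = ‖t‖ ^ 2 * ‖b i‖ ^ 2 := by
        intro i; simp [Pi.smul_apply, norm_smul, mul_pow]
      have ht2 : (0 : ℝ) < ‖t‖ ^ 2 := pow_pos (norm_pos_iff.mpr ht) 2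
      simp only [hnorm]
      rw [← mul_sub, show ‖t‖ ^ 2 * ‖b 0‖ ^ 2 + ‖t‖ ^ 2 * ‖b 1‖ ^ 2 + ‖t‖ ^ 2 * ‖b 2‖ ^ 2
            = ‖t‖ ^ 2 * (‖b 0‖ ^ 2 + ‖b 1‖ ^ 2 + ‖b 2‖ ^ 2) by ring,
        mul_div_mul_left _ _ ht2.ne'])

/-- The action of `λ ∈ ℂ*` on `ℙ²`: `λ · [x:y:z] = [λx : λ⁻¹y : z]`
(junk value: the identity for `λ = 0`). -/
noncomputable def act (l : ℂ) (p : P2) : P2 :=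
  if l = 0 then p else pt (l * p.rep 0) (l⁻¹ * p.rep 1) (p.rep 2)

/-- The `ℂ*`-orbit of a point of `ℙ²` under the action `λ · [x:y:z] = [λx : λ⁻¹y : z]`. -/
def orb (p : P2) : Set P2 := {q | ∃ l : ℂ, l ≠ 0 ∧ q = act l p}

private lemma key_aux (A B C s₁ s₂ : ℝ) (hA : 0 ≤ A) (hB : 0 ≤ B) (hC : 0 ≤ C)
    (hpair : 0 < A*B ∨ 0 < A*C ∨ 0 < B*C) (hs1 : 0 < s₁) (hs12 : s₁ < s₂) :
    (A*s₁^2 - B)/(A*s₁^2 + C*s₁ + B) < (A*s₂^2 - B)/(A*s₂^2 + C*s₂ + B) := by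
  have hs2 : 0 < s₂ := hs1.trans hs12
  have hden : ∀ s : ℝ, 0 < s → 0 < A*s^2 + C*s + B := by
    intro s hs
    have h1 : 0 ≤ A*s^2 := mul_nonneg hA (sq_nonneg s)
    have h2 : 0 ≤ C*s := mul_nonneg hC hs.le
    rcases hpair with h|h|h <;> nlinarith [pow_pos hs 2]
  rw [div_lt_div_iff₀ (hden _ hs1) (hden _ hs2)]
  have hF : 0 < A*C*(s₁*s₂) + 2*(A*B)*(s₁+s₂) + B*C := by
    have h1 : 0 ≤ A*C*(s₁*s₂) := mul_nonneg (mul_nonneg hA hC) (mul_pos hs1 hs2).le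
    have h2 : 0 ≤ 2*(A*B)*(s₁+s₂) := by positivity
    have h3 : 0 ≤ B*C := mul_nonneg hB hC
    rcases hpair with h|h|h
    · nlinarith
    · nlinarith [mul_pos h (mul_pos hs1 hs2)]
    · nlinarith
  nlinarith [mul_pos (sub_pos.2 hs12) hF]

/-- For every `p = [x:y:z] ∈ ℙ²` which is not one of the three coordinate points,
the function `r ↦ Φ(r·p) = Φ([rx : r⁻¹y : z])` is strictly increasing on `ℝ_{>0}`. -/
theorem Phi_strictMonoOn_flow (p : P2)
    (h100 : p ≠ pt 1 0 0) (h010 : p ≠ pt 0 1 0) (h001 : p ≠ pt 0 0 1) :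
    StrictMonoOn (fun r : ℝ => Phi (act (r : ℂ) p)) (Set.Ioi (0 : ℝ)) := by
  -- Coordinate non-vanishing facts
  have hc100 : ¬ (p.rep 1 = 0 ∧ p.rep 2 = 0) := by
    rintro ⟨h1, h2⟩
    apply h100
    rw [← p.mk_rep]
    unfold pt
    rw [dif_pos (by simp : ¬(![(1:ℂ),0,0] = 0))]
    rw [mk_eq_mk_iff']
    exact ⟨p.rep 0, by funext i; fin_cases i <;> simp [h1, h2]⟩
  have hc010 : ¬ (p.rep 0 = 0 ∧ p.rep 2 = 0) := by
    rintro ⟨h1, h2⟩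
    apply h010
    rw [← p.mk_rep]
    unfold pt
    rw [dif_pos (by simp : ¬(![(0:ℂ),1,0] = 0))]
    rw [mk_eq_mk_iff']
    exact ⟨p.rep 1, by funext i; fin_cases i <;> simp [h1, h2]⟩
  have hc001 : ¬ (p.rep 0 = 0 ∧ p.rep 1 = 0) := by
    rintro ⟨h1, h2⟩
    apply h001
    rw [← p.mk_rep]
    unfold pt
    rw [dif_pos (by simp : ¬(![(0:ℂ),0,1] = 0))]
    rw [mk_eq_mk_iff']
    exact ⟨p.rep 2, by funext i; fin_cases i <;> simp [h1, h2]⟩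
  set A : ℝ := ‖p.rep 0‖^2 with hA
  set B : ℝ := ‖p.rep 1‖^2 with hB
  set C : ℝ := ‖p.rep 2‖^2 with hC
  have hA0 : 0 ≤ A := sq_nonneg _
  have hB0 : 0 ≤ B := sq_nonneg _
  have hC0 : 0 ≤ C := sq_nonneg _
  have hpos : ∀ w : ℂ, w ≠ 0 → (0:ℝ) < ‖w‖^2 := fun w hw => pow_pos (norm_pos_iff.2 hw) 2
  have hpair : 0 < A*B ∨ 0 < A*C ∨ 0 < B*C := by
    by_cases h0 : p.rep 0 = 0
    · have h1 : p.rep 1 ≠ 0 := fun h => hc001 ⟨h0, h⟩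
      have h2 : p.rep 2 ≠ 0 := fun h => hc010 ⟨h0, h⟩
      exact Or.inr (Or.inr (mul_pos (hpos _ h1) (hpos _ h2)))
    · by_cases h1 : p.rep 1 = 0
      · have h2 : p.rep 2 ≠ 0 := fun h => hc100 ⟨h1, h⟩
        exact Or.inr (Or.inl (mul_pos (hpos _ h0) (hpos _ h2)))
      · exact Or.inl (mul_pos (hpos _ h0) (hpos _ h1))
  have heval : ∀ r : ℝ, 0 < r →
      Phi (act (r : ℂ) p) = (A*(r^2)^2 - B)/(A*(r^2)^2 + C*(r^2) + B) := by
    intro r hr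
    have hrc : (r : ℂ) ≠ 0 := by exact_mod_cast hr.ne'
    have hv : ![(r:ℂ) * p.rep 0, (r:ℂ)⁻¹ * p.rep 1, p.rep 2] ≠ 0 := by
      intro h
      have e0 := congrFun h 0
      have e1 := congrFun h 1
      have e2 := congrFun h 2
      simp [hrc] at e0 e1 e2
      rcases hpair with hp|hp|hp <;> simp [hA, hB, hC, e0, e1, e2] at hp
    unfold act
    rw [if_neg hrc]
    unfold pt
    rw [dif_pos hv]
    unfold Phi
    rw [Projectivization.lift_mk]
    simp only [Matrix.cons_val_zero, Matrix.cons_val_one, Matrix.head_cons,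
      Matrix.cons_val_two, Matrix.tail_cons]
    have hnr : ‖(r:ℂ)‖ = r := by
      rw [Complex.norm_real]; exact abs_of_pos hr
    have h0 : ‖(r:ℂ) * p.rep 0‖^2 = A * r^2 := by
      rw [norm_mul, hnr, hA]; ring
    have h1 : ‖(r:ℂ)⁻¹ * p.rep 1‖^2 = B * (r⁻¹)^2 := by
      rw [norm_mul, norm_inv, hnr, hB]; ring
    rw [h0, h1]
    have hd1 : A * r^2 + B * (r⁻¹)^2 + C ≠ 0 := by
      rcases hpair with hp|hp|hp <;>
        nlinarith [mul_nonneg hA0 (sq_nonneg r), mul_nonneg hB0 (sq_nonneg r⁻¹),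
          pow_pos hr 2, pow_pos (inv_pos.2 hr) 2]
    have hd2 : A*(r^2)^2 + C*(r^2) + B ≠ 0 := by
      rcases hpair with hp|hp|hp <;>
        nlinarith [mul_nonneg hA0 (sq_nonneg (r^2)), mul_nonneg hC0 (sq_nonneg r),
          pow_pos hr 2, pow_pos (pow_pos hr 2) 2]
    rw [div_eq_div_iff hd1 hd2]
    field_simp
    ring
  intro r₁ hr₁ r₂ hr₂ h12
  simp only
  rw [heval r₁ hr₁, heval r₂ hr₂]
  exact key_aux A B C (r₁^2) (r₂^2) hA0 hB0 hC0 hpair (pow_pos hr₁ 2)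
    (by nlinarith [Set.mem_Ioi.1 hr₁, Set.mem_Ioi.1 hr₂])
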